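/- Let A be an action set with partition {A^r, A^l, A^bi}. The axioms of A_CC^≡ are sound for covariant-contravariant simulation equivalence: for all closed BCCSP processes x, y, all a, b ∈ A^r and all a', b' ∈ A^l, we have a.(x + b.y) ≡_CC a.(x + b.y) + a.x, a.x ≡_CC a.x + a.(x + b'.y), a'.x ≡_CC a'.x + a'.(x + b.y), and a'.(x + b'.y) ≡_CC a'.(x + b'.y) + a'.x. -/
import Mathlib


inductive Proc (A : Type) : Type
  | nil : Proc A
  | pre : A → Proc A → Proc A
  | add : Proc A → Proc A → Proc A

inductive Step {A : Type} : Proc A → A → Proc A → Prop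
  | pre (a : A) (p : Proc A) : Step (.pre a p) a p
  | addL {p : Proc A} {a : A} {p' : Proc A} (q : Proc A) :
      Step p a p' → Step (.add p q) a p'
  | addR {q : Proc A} {a : A} {q' : Proc A} (p : Proc A) :
      Step q a q' → Step (.add p q) a q'

/-- `initials p` is the set `I(p)` of actions that `p` can immediately perform. -/
def initials {A : Type} (p : Proc A) : Set A := {a | ∃ p', Step p a p'}

/-- `{Ar, Al, Abi}` is a partition of the action set `A` (cells may be empty). -/
def IsPartition {A : Type} (Ar Al Abi : Set A) : Prop :=
  (Ar ∪ Al ∪ Abi = Set.univ) ∧ Disjoint Ar Al ∧ Disjoint Ar Abi ∧ Disjoint Al Abi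

/-- Covariant-contravariant simulation w.r.t. covariant actions `Ar`,
contravariant actions `Al` and bivariant actions `Abi`. -/
def IsCCSim {A : Type} (Ar Al Abi : Set A) (S : Proc A → Proc A → Prop) : Prop :=
  ∀ p q, S p q →
    (∀ a ∈ Ar ∪ Abi, ∀ p', Step p a p' → ∃ q', Step q a q' ∧ S p' q') ∧
    (∀ a ∈ Al ∪ Abi, ∀ q', Step q a q' → ∃ p', Step p a p' ∧ S p' q')

/-- The covariant-contravariant simulation preorder `p ≲_CC q`. -/
def ccLe {A : Type} (Ar Al Abi : Set A) (p q : Proc A) : Prop :=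
  ∃ S, IsCCSim Ar Al Abi S ∧ S p q

/-- Covariant-contravariant simulation equivalence `p ≡_CC q`. -/
def ccEq {A : Type} (Ar Al Abi : Set A) (p q : Proc A) : Prop :=
  ccLe Ar Al Abi p q ∧ ccLe Ar Al Abi q p

/-- Conformance simulation. -/
def IsConfSim {A : Type} (R : Proc A → Proc A → Prop) : Prop :=
  ∀ p q, R p q →
    initials p ⊆ initials q ∧
    (∀ a q', Step q a q' → a ∈ initials p → ∃ p', Step p a p' ∧ R p' q')

/-- The conformance simulation preorder `p ≲_CS q`. -/
def csLe {A : Type} (p q : Proc A) : Prop := ∃ R, IsConfSim R ∧ R p q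

/-- Conformance simulation equivalence `p ≡_CS q`. -/
def csEq {A : Type} (p q : Proc A) : Prop := csLe p q ∧ csLe q p

/-- The conformance precongruence `p ⊑_CS q`. -/
def csPre {A : Type} (p q : Proc A) : Prop := csLe p q ∧ initials q ⊆ initials p

/-- Plain simulation. -/
def IsSim {A : Type} (S : Proc A → Proc A → Prop) : Prop :=
  ∀ p q, S p q → ∀ a p', Step p a p' → ∃ q', Step q a q' ∧ S p' q'

/-- The plain simulation preorder `p ≲_S q`. -/
def simLe {A : Type} (p q : Proc A) : Prop := ∃ S, IsSim S ∧ S p q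

/-- Ready simulation. -/
def IsRSim {A : Type} (S : Proc A → Proc A → Prop) : Prop :=
  ∀ p q, S p q → initials p = initials q ∧
    (∀ a p', Step p a p' → ∃ q', Step q a q' ∧ S p' q')

/-- The ready simulation preorder `p ≲_RS q`. -/
def rsLe {A : Type} (p q : Proc A) : Prop := ∃ S, IsRSim S ∧ S p q

/-- Ready conformance simulation: a conformance simulation that additionally
guarantees `I(q) ⊆ I(p)` for all related pairs. -/
def IsRCSim {A : Type} (R : Proc A → Proc A → Prop) : Prop :=
  IsConfSim R ∧ ∀ p q, R p q → initials q ⊆ initials p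

/-- The ready conformance simulation preorder `p ≲_RCS q`. -/
def rcsLe {A : Type} (p q : Proc A) : Prop := ∃ R, IsRCSim R ∧ R p q

/-- Open BCCSP terms (with variables indexed by `ℕ`). -/
inductive Term (A : Type) : Type
  | var : ℕ → Term A
  | nil : Term A
  | pre : A → Term A → Term A
  | add : Term A → Term A → Term A

/-- Closed substitution applied to an open term. -/
def Term.subst {A : Type} (σ : ℕ → Proc A) : Term A → Proc A
  | .var n => σ n
  | .nil => .nil
  | .pre a t => .pre a (t.subst σ)
  | .add s t => .add (s.subst σ) (t.subst σ)

/-- View a closed process as an (open) term. -/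
def Proc.toTerm {A : Type} : Proc A → Term A
  | .nil => .nil
  | .pre a p => .pre a p.toTerm
  | .add p q => .add p.toTerm q.toTerm

/-- Inequational derivability (between closed processes) from a set `E` of
inequations between open terms: the least relation containing all substitution
instances of `E` and closed under reflexivity, transitivity and the congruence
rules for prefixing and `+`. -/
inductive DerivLe {A : Type} (E : Set (Term A × Term A)) : Proc A → Proc A → Prop
  | ax (l r : Term A) (σ : ℕ → Proc A) : (l, r) ∈ E → DerivLe E (l.subst σ) (r.subst σ)
  | refl (p : Proc A) : DerivLe E p p
  | trans {p q r : Proc A} : DerivLe E p q → DerivLe E q r → DerivLe E p r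
  | pre (a : A) {p q : Proc A} : DerivLe E p q → DerivLe E (.pre a p) (.pre a q)
  | add {p q r s : Proc A} : DerivLe E p q → DerivLe E r s → DerivLe E (.add p r) (.add q s)

/-- Equational derivability (between closed processes) from a set `E` of
equations between open terms. -/
inductive DerivEq {A : Type} (E : Set (Term A × Term A)) : Proc A → Proc A → Prop
  | ax (l r : Term A) (σ : ℕ → Proc A) : (l, r) ∈ E → DerivEq E (l.subst σ) (r.subst σ)
  | refl (p : Proc A) : DerivEq E p p
  | symm {p q : Proc A} : DerivEq E p q → DerivEq E q p
  | trans {p q r : Proc A} : DerivEq E p q → DerivEq E q r → DerivEq E p r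
  | pre (a : A) {p q : Proc A} : DerivEq E p q → DerivEq E (.pre a p) (.pre a q)
  | add {p q r s : Proc A} : DerivEq E p q → DerivEq E r s → DerivEq E (.add p r) (.add q s)

/-- Substitution of (possibly open) terms for variables. -/
def Term.substT {A : Type} (σ : ℕ → Term A) : Term A → Term A
  | .var n => σ n
  | .nil => .nil
  | .pre a t => .pre a (t.substT σ)
  | .add s t => .add (s.substT σ) (t.substT σ)

/-- Equational derivability between open terms from a set `E` of equations. -/
inductive TDerivEq {A : Type} (E : Set (Term A × Term A)) : Term A → Term A → Prop
  | ax (l r : Term A) (σ : ℕ → Term A) : (l, r) ∈ E → TDerivEq E (l.substT σ) (r.substT σ)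
  | refl (t : Term A) : TDerivEq E t t
  | symm {s t : Term A} : TDerivEq E s t → TDerivEq E t s
  | trans {s t u : Term A} : TDerivEq E s t → TDerivEq E t u → TDerivEq E s u
  | pre (a : A) {s t : Term A} : TDerivEq E s t → TDerivEq E (.pre a s) (.pre a t)
  | add {s t u v : Term A} : TDerivEq E s t → TDerivEq E u v → TDerivEq E (.add s u) (.add t v)

/-- The bisimulation axioms B1–B4, as equations. -/
def BEqns (A : Type) : Set (Term A × Term A) :=
  { (.add (.var 0) (.var 1), .add (.var 1) (.var 0)),
    (.add (.add (.var 0) (.var 1)) (.var 2), .add (.var 0) (.add (.var 1) (.var 2))),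
    (.add (.var 0) (.var 0), .var 0),
    (.add (.var 0) .nil, .var 0) }

/-- The bisimulation axioms B1–B4, each used as two inequations. -/
def BIneqs (A : Type) : Set (Term A × Term A) := BEqns A ∪ Prod.swap '' BEqns A

section CCHelpers

variable {A : Type} {Ar Al Abi : Set A}

private lemma notmem_of_r (hpart : IsPartition Ar Al Abi) {c : A} (hc : c ∈ Ar) :
    c ∉ Al ∪ Abi := by
  obtain ⟨-, h1, h2, -⟩ := hpart
  rintro (h | h)
  · exact Set.disjoint_left.mp h1 hc h
  · exact Set.disjoint_left.mp h2 hc h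

private lemma notmem_of_l (hpart : IsPartition Ar Al Abi) {c : A} (hc : c ∈ Al) :
    c ∉ Ar ∪ Abi := by
  obtain ⟨-, h1, -, h3⟩ := hpart
  rintro (h | h)
  · exact Set.disjoint_left.mp h1 h hc
  · exact Set.disjoint_left.mp h3 hc h

private lemma cc_inj1 (hpart : IsPartition Ar Al Abi) {b : A} (hb : b ∈ Ar)
    (x y : Proc A) : ccLe Ar Al Abi x (.add x (.pre b y)) := by
  refine ⟨fun p q => q = .add p (.pre b y) ∨ p = q, ?_, Or.inl rfl⟩
  rintro p q (rfl | rfl)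
  · constructor
    · intro a _ p' hs; exact ⟨p', Step.addL _ hs, Or.inr rfl⟩
    · intro a ha q' hs
      cases hs with
      | addL _ h => exact ⟨_, h, Or.inr rfl⟩
      | addR _ h => cases h; exact absurd ha (notmem_of_r hpart hb)
  · exact ⟨fun a _ p' hs => ⟨p', hs, Or.inr rfl⟩,
      fun a _ q' hs => ⟨q', hs, Or.inr rfl⟩⟩

private lemma cc_inj2 (hpart : IsPartition Ar Al Abi) {b : A} (hb : b ∈ Al)
    (x y : Proc A) : ccLe Ar Al Abi (.add x (.pre b y)) x := by
  refine ⟨fun p q => p = .add q (.pre b y) ∨ p = q, ?_, Or.inl rfl⟩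
  rintro p q (rfl | rfl)
  · constructor
    · intro a ha p' hs
      cases hs with
      | addL _ h => exact ⟨_, h, Or.inr rfl⟩
      | addR _ h => cases h; exact absurd ha (notmem_of_l hpart hb)
    · intro a _ q' hs; exact ⟨q', Step.addL _ hs, Or.inr rfl⟩
  · exact ⟨fun a _ p' hs => ⟨p', hs, Or.inr rfl⟩,
      fun a _ q' hs => ⟨q', hs, Or.inr rfl⟩⟩

private lemma cc_ps1r (hpart : IsPartition Ar Al Abi) {c : A} (hc : c ∈ Ar)
    (u v : Proc A) : ccLe Ar Al Abi (.pre c u) (.add (.pre c u) (.pre c v)) := by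
  refine ⟨fun p q => (p = .pre c u ∧ q = .add (.pre c u) (.pre c v)) ∨ p = q,
    ?_, Or.inl ⟨rfl, rfl⟩⟩
  rintro p q (⟨rfl, rfl⟩ | rfl)
  · constructor
    · intro a _ p' hs
      cases hs
      exact ⟨u, Step.addL _ (Step.pre c u), Or.inr rfl⟩
    · intro a ha q' hs
      cases hs with
      | addL _ h => cases h; exact absurd ha (notmem_of_r hpart hc)
      | addR _ h => cases h; exact absurd ha (notmem_of_r hpart hc)
  · exact ⟨fun a _ p' hs => ⟨p', hs, Or.inr rfl⟩,
      fun a _ q' hs => ⟨q', hs, Or.inr rfl⟩⟩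

private lemma cc_ps2r (hpart : IsPartition Ar Al Abi) {c : A} (hc : c ∈ Ar)
    {u v : Proc A} (hv : ccLe Ar Al Abi v u) :
    ccLe Ar Al Abi (.add (.pre c u) (.pre c v)) (.pre c u) := by
  obtain ⟨S₀, hS₀, hvu⟩ := hv
  refine ⟨fun p q => (p = .add (.pre c u) (.pre c v) ∧ q = .pre c u) ∨ p = q ∨ S₀ p q,
    ?_, Or.inl ⟨rfl, rfl⟩⟩
  rintro p q (⟨rfl, rfl⟩ | rfl | h)
  · constructor
    · intro a _ p' hs
      cases hs with
      | addL _ h => cases h; exact ⟨u, Step.pre c u, Or.inr (Or.inl rfl)⟩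
      | addR _ h => cases h; exact ⟨u, Step.pre c u, Or.inr (Or.inr hvu)⟩
    · intro a ha q' hs
      cases hs; exact absurd ha (notmem_of_r hpart hc)
  · exact ⟨fun a _ p' hs => ⟨p', hs, Or.inr (Or.inl rfl)⟩,
      fun a _ q' hs => ⟨q', hs, Or.inr (Or.inl rfl)⟩⟩
  · obtain ⟨h1, h2⟩ := hS₀ p q h
    exact ⟨fun a ha p' hs => (h1 a ha p' hs).imp
        (fun q' hq => ⟨hq.1, Or.inr (Or.inr hq.2)⟩),
      fun a ha q' hs => (h2 a ha q' hs).imp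
        (fun p' hp => ⟨hp.1, Or.inr (Or.inr hp.2)⟩)⟩

private lemma cc_ps1l (hpart : IsPartition Ar Al Abi) {c : A} (hc : c ∈ Al)
    {u v : Proc A} (hv : ccLe Ar Al Abi u v) :
    ccLe Ar Al Abi (.pre c u) (.add (.pre c u) (.pre c v)) := by
  obtain ⟨S₀, hS₀, huv⟩ := hv
  refine ⟨fun p q => (p = .pre c u ∧ q = .add (.pre c u) (.pre c v)) ∨ p = q ∨ S₀ p q,
    ?_, Or.inl ⟨rfl, rfl⟩⟩
  rintro p q (⟨rfl, rfl⟩ | rfl | h)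
  · constructor
    · intro a ha p' hs
      cases hs; exact absurd ha (notmem_of_l hpart hc)
    · intro a _ q' hs
      cases hs with
      | addL _ h => cases h; exact ⟨u, Step.pre c u, Or.inr (Or.inl rfl)⟩
      | addR _ h => cases h; exact ⟨u, Step.pre c u, Or.inr (Or.inr huv)⟩
  · exact ⟨fun a _ p' hs => ⟨p', hs, Or.inr (Or.inl rfl)⟩,
      fun a _ q' hs => ⟨q', hs, Or.inr (Or.inl rfl)⟩⟩
  · obtain ⟨h1, h2⟩ := hS₀ p q h
    exact ⟨fun a ha p' hs => (h1 a ha p' hs).imp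
        (fun q' hq => ⟨hq.1, Or.inr (Or.inr hq.2)⟩),
      fun a ha q' hs => (h2 a ha q' hs).imp
        (fun p' hp => ⟨hp.1, Or.inr (Or.inr hp.2)⟩)⟩

private lemma cc_ps2l (hpart : IsPartition Ar Al Abi) {c : A} (hc : c ∈ Al)
    (u v : Proc A) : ccLe Ar Al Abi (.add (.pre c u) (.pre c v)) (.pre c u) := by
  refine ⟨fun p q => (p = .add (.pre c u) (.pre c v) ∧ q = .pre c u) ∨ p = q,
    ?_, Or.inl ⟨rfl, rfl⟩⟩
  rintro p q (⟨rfl, rfl⟩ | rfl)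
  · constructor
    · intro a ha p' hs
      cases hs with
      | addL _ h => cases h; exact absurd ha (notmem_of_l hpart hc)
      | addR _ h => cases h; exact absurd ha (notmem_of_l hpart hc)
    · intro a _ q' hs
      cases hs
      exact ⟨u, Step.addL _ (Step.pre c u), Or.inr rfl⟩
  · exact ⟨fun a _ p' hs => ⟨p', hs, Or.inr rfl⟩,
      fun a _ q' hs => ⟨q', hs, Or.inr rfl⟩⟩

end CCHelpers

/-- Soundness of the axioms S1–S4 of `A_CC^≡` for `≡_CC`. -/
theorem ACCEq_sound {A : Type} (Ar Al Abi : Set A)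
    (hpart : IsPartition Ar Al Abi) (x y : Proc A)
    (a b a' b' : A) (ha : a ∈ Ar) (hb : b ∈ Ar) (ha' : a' ∈ Al) (hb' : b' ∈ Al) :
    ccEq Ar Al Abi (.pre a (.add x (.pre b y)))
      (.add (.pre a (.add x (.pre b y))) (.pre a x)) ∧
    ccEq Ar Al Abi (.pre a x)
      (.add (.pre a x) (.pre a (.add x (.pre b' y)))) ∧
    ccEq Ar Al Abi (.pre a' x)
      (.add (.pre a' x) (.pre a' (.add x (.pre b y)))) ∧
    ccEq Ar Al Abi (.pre a' (.add x (.pre b' y)))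
      (.add (.pre a' (.add x (.pre b' y))) (.pre a' x)) := by
  exact ⟨⟨cc_ps1r hpart ha _ _, cc_ps2r hpart ha (cc_inj1 hpart hb x y)⟩,
    ⟨cc_ps1r hpart ha _ _, cc_ps2r hpart ha (cc_inj2 hpart hb' x y)⟩,
    ⟨cc_ps1l hpart ha' (cc_inj1 hpart hb x y), cc_ps2l hpart ha' _ _⟩,
    ⟨cc_ps1l hpart ha' (cc_inj2 hpart hb' x y), cc_ps2l hpart ha' _ _⟩⟩
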